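/- For box parameters L ≥ 0, q₀ > 0, h > q₀, θ, α ∈ ℝ, let a(z) and b(z) be the explicit box scattering coefficients (defined via k(z) = (z+q₀²/z)/2, λ(z) = (z−q₀²/z)/2 and either square root μ(z) of k(z)² − h²), and set μ₀ = √(h² − q₀²) > 0. Then the limits α₊ = lim_{z→q₀} (z − q₀)·a(z) and α₋ = lim_{z→−q₀} (z + q₀)·a(z) exist, with α± = i q₀ e^{iθ}·[ ∓ sin θ · cosh(2Lμ₀) + (h cos α − q₀ cos θ)·sinh(2Lμ₀)/μ₀ ]; similarly β₊ = lim_{z→q₀} (z − q₀)·b(z) and β₋ = lim_{z→−q₀} (z + q₀)·b(z) exist, with β± = −q₀·[ sin θ · cosh(2Lμ₀) ∓ (h cos α − q₀ cos θ)·sinh(2Lμ₀)/μ₀ ]. In particular β± = ∓ i e^{−iθ} α± and β± are real. -/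

import Mathlib

open Complex Topology Filter

/-- `k(z) = (z + q₀²/z)/2`. -/
noncomputable def kk (q₀ z : ℝ) : ℝ := (z + q₀ ^ 2 / z) / 2

/-- `λ(z) = (z − q₀²/z)/2`. -/
noncomputable def lam (q₀ z : ℝ) : ℝ := (z - q₀ ^ 2 / z) / 2

/-- The explicit box scattering coefficient `a(z)`, for a choice `μ` of square root of
`k(z)² − h²`. -/
noncomputable def aBox (L q₀ h θ α : ℝ) (μ : ℝ → ℂ) (z : ℝ) : ℂ :=
  1 / ((lam q₀ z : ℂ) * μ z) *
    Complex.exp (Complex.I * ((2 * L * lam q₀ z + θ : ℝ) : ℂ)) *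
    (μ z * Complex.cos (2 * (L : ℂ) * μ z) *
        ((lam q₀ z : ℂ) * (Real.cos θ : ℂ) - Complex.I * (kk q₀ z : ℂ) * (Real.sin θ : ℂ)) +
      Complex.I * Complex.sin (2 * (L : ℂ) * μ z) *
        (((h * q₀ * Real.cos α : ℝ) : ℂ) -
          (kk q₀ z : ℂ) *
            ((kk q₀ z : ℂ) * (Real.cos θ : ℂ) -
              Complex.I * (lam q₀ z : ℂ) * (Real.sin θ : ℂ))))

/-- The explicit box scattering coefficient `b(z)`, for a choice `μ` of square root of
`k(z)² − h²`. -/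
noncomputable def bBox (L q₀ h θ α : ℝ) (μ : ℝ → ℂ) (z : ℝ) : ℂ :=
  1 / ((lam q₀ z : ℂ) * μ z) *
    (-(q₀ : ℂ) * μ z * (Real.sin θ : ℂ) * Complex.cos (2 * (L : ℂ) * μ z) +
      (((h * kk q₀ z * Real.cos α - kk q₀ z * q₀ * Real.cos θ : ℝ) : ℂ) -
          Complex.I * (h : ℂ) * (lam q₀ z : ℂ) * (Real.sin α : ℂ)) *
        Complex.sin (2 * (L : ℂ) * μ z))

/-- `μ₀ = √(h² − q₀²)`. -/
noncomputable def mu0 (q₀ h : ℝ) : ℝ := Real.sqrt (h ^ 2 - q₀ ^ 2)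

/-- `α₊ = i q₀ e^{iθ}·[−sin θ·cosh(2Lμ₀) + (h cos α − q₀ cos θ)·sinh(2Lμ₀)/μ₀]`. -/
noncomputable def alphaPlus (L q₀ h θ α : ℝ) : ℂ :=
  Complex.I * (q₀ : ℂ) * Complex.exp (Complex.I * (θ : ℂ)) *
    ((-Real.sin θ * Real.cosh (2 * L * mu0 q₀ h) +
        (h * Real.cos α - q₀ * Real.cos θ) * Real.sinh (2 * L * mu0 q₀ h) / mu0 q₀ h : ℝ) : ℂ)

/-- `α₋ = i q₀ e^{iθ}·[sin θ·cosh(2Lμ₀) + (h cos α − q₀ cos θ)·sinh(2Lμ₀)/μ₀]`. -/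
noncomputable def alphaMinus (L q₀ h θ α : ℝ) : ℂ :=
  Complex.I * (q₀ : ℂ) * Complex.exp (Complex.I * (θ : ℂ)) *
    ((Real.sin θ * Real.cosh (2 * L * mu0 q₀ h) +
        (h * Real.cos α - q₀ * Real.cos θ) * Real.sinh (2 * L * mu0 q₀ h) / mu0 q₀ h : ℝ) : ℂ)

/-- `β₊ = −q₀·[sin θ·cosh(2Lμ₀) − (h cos α − q₀ cos θ)·sinh(2Lμ₀)/μ₀]`. -/
noncomputable def betaPlus (L q₀ h θ α : ℝ) : ℂ :=
  ((-(q₀ * (Real.sin θ * Real.cosh (2 * L * mu0 q₀ h) -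
      (h * Real.cos α - q₀ * Real.cos θ) * Real.sinh (2 * L * mu0 q₀ h) / mu0 q₀ h)) : ℝ) : ℂ)

/-- `β₋ = −q₀·[sin θ·cosh(2Lμ₀) + (h cos α − q₀ cos θ)·sinh(2Lμ₀)/μ₀]`. -/
noncomputable def betaMinus (L q₀ h θ α : ℝ) : ℂ :=
  ((-(q₀ * (Real.sin θ * Real.cosh (2 * L * mu0 q₀ h) +
      (h * Real.cos α - q₀ * Real.cos θ) * Real.sinh (2 * L * mu0 q₀ h) / mu0 q₀ h)) : ℝ) : ℂ)

/-! ### Auxiliary material for the proof -/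

/-- The canonical continuous choice of square root of `k(z)² − h²` near `z = ±q₀`. -/
noncomputable def nuC (q₀ h : ℝ) (z : ℝ) : ℂ :=
  Complex.I * ((Real.sqrt (h ^ 2 - kk q₀ z ^ 2) : ℝ) : ℂ)

/-- The regularized version of `(z − c)·a(z)` using the continuous root `nuC`. -/
noncomputable def Fa (L q₀ h θ α c : ℝ) (z : ℝ) : ℂ :=
  2 * (z : ℂ) / ((z : ℂ) + (c : ℂ)) * (1 / nuC q₀ h z) *
    Complex.exp (Complex.I * ((2 * L * lam q₀ z + θ : ℝ) : ℂ)) *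
    (nuC q₀ h z * Complex.cos (2 * (L : ℂ) * nuC q₀ h z) *
        ((lam q₀ z : ℂ) * (Real.cos θ : ℂ) - Complex.I * (kk q₀ z : ℂ) * (Real.sin θ : ℂ)) +
      Complex.I * Complex.sin (2 * (L : ℂ) * nuC q₀ h z) *
        (((h * q₀ * Real.cos α : ℝ) : ℂ) -
          (kk q₀ z : ℂ) *
            ((kk q₀ z : ℂ) * (Real.cos θ : ℂ) -
              Complex.I * (lam q₀ z : ℂ) * (Real.sin θ : ℂ))))

/-- The regularized version of `(z − c)·b(z)` using the continuous root `nuC`. -/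
noncomputable def Fb (L q₀ h θ α c : ℝ) (z : ℝ) : ℂ :=
  2 * (z : ℂ) / ((z : ℂ) + (c : ℂ)) * (1 / nuC q₀ h z) *
    (-(q₀ : ℂ) * nuC q₀ h z * (Real.sin θ : ℂ) * Complex.cos (2 * (L : ℂ) * nuC q₀ h z) +
      (((h * kk q₀ z * Real.cos α - kk q₀ z * q₀ * Real.cos θ : ℝ) : ℂ) -
          Complex.I * (h : ℂ) * (lam q₀ z : ℂ) * (Real.sin α : ℂ)) *
        Complex.sin (2 * (L : ℂ) * nuC q₀ h z))

lemma aBox_neg (L q₀ h θ α : ℝ) (μ ν : ℝ → ℂ) (z : ℝ) (hz : μ z = -ν z) :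
    aBox L q₀ h θ α μ z = aBox L q₀ h θ α ν z := by
  simp only [aBox, hz, mul_neg, neg_mul, Complex.cos_neg, Complex.sin_neg, div_neg]
  ring

lemma bBox_neg (L q₀ h θ α : ℝ) (μ ν : ℝ → ℂ) (z : ℝ) (hz : μ z = -ν z) :
    bBox L q₀ h θ α μ z = bBox L q₀ h θ α ν z := by
  simp only [bBox, hz, mul_neg, neg_mul, neg_neg, Complex.cos_neg, Complex.sin_neg, div_neg]
  ring

/-- Factoring out the simple pole of `1/λ` at `z = c` with `c² = q₀²`. -/
lemma pole_factor (q₀ c z : ℝ) (hc2 : c ^ 2 = q₀ ^ 2) (hz0 : z ≠ 0) (hzc : z ≠ c)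
    (hzc' : z ≠ -c) (w E Q : ℂ) :
    ((z : ℂ) - (c : ℂ)) * (1 / ((lam q₀ z : ℂ) * w) * E * Q) =
      2 * (z : ℂ) / ((z : ℂ) + (c : ℂ)) * (1 / w) * E * Q := by
  have hz0' : ((z : ℝ) : ℂ) ≠ 0 := by exact_mod_cast hz0
  have hzc2 : ((z : ℂ) + (c : ℂ)) ≠ 0 := by
    intro h0
    exact hzc' (by exact_mod_cast eq_neg_of_add_eq_zero_left h0)
  have hzc1 : ((z : ℂ) - (c : ℂ)) ≠ 0 := by
    intro h0
    exact hzc (by exact_mod_cast sub_eq_zero.mp h0)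
  have hlamz : ((lam q₀ z : ℝ) : ℂ) * (2 * z) = ((z : ℂ) - c) * ((z : ℂ) + c) := by
    have hc2' : ((c : ℝ) : ℂ) ^ 2 = ((q₀ : ℝ) : ℂ) ^ 2 := by exact_mod_cast hc2
    rw [lam]
    push_cast
    field_simp
    linear_combination hc2'
  have hlam0 : ((lam q₀ z : ℝ) : ℂ) ≠ 0 := by
    intro h0
    rw [h0, zero_mul] at hlamz
    exact (mul_ne_zero hzc1 hzc2) hlamz.symm
  have key : ((z : ℂ) - c) / ((lam q₀ z : ℝ) : ℂ) = 2 * (z : ℂ) / ((z : ℂ) + c) := by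
    rw [div_eq_div_iff hlam0 hzc2]
    linear_combination (-1 : ℂ) * hlamz
  calc ((z : ℂ) - (c : ℂ)) * (1 / ((lam q₀ z : ℂ) * w) * E * Q)
      = (((z : ℂ) - c) / ((lam q₀ z : ℝ) : ℂ)) * ((1 / w) * E * Q) := by
        field_simp
    _ = 2 * (z : ℂ) / ((z : ℂ) + (c : ℂ)) * (1 / w) * E * Q := by rw [key]; ring

lemma pole_factor' (q₀ c z : ℝ) (hc2 : c ^ 2 = q₀ ^ 2) (hz0 : z ≠ 0) (hzc : z ≠ c)
    (hzc' : z ≠ -c) (w Q : ℂ) :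
    ((z : ℂ) - (c : ℂ)) * (1 / ((lam q₀ z : ℂ) * w) * Q) =
      2 * (z : ℂ) / ((z : ℂ) + (c : ℂ)) * (1 / w) * Q := by
  have h1 := pole_factor q₀ c z hc2 hz0 hzc hzc' w Q 1
  calc ((z : ℂ) - (c : ℂ)) * (1 / ((lam q₀ z : ℂ) * w) * Q)
      = ((z : ℂ) - (c : ℂ)) * (1 / ((lam q₀ z : ℂ) * w) * Q * 1) := by ring
    _ = 2 * (z : ℂ) / ((z : ℂ) + (c : ℂ)) * (1 / w) * Q * 1 := h1
    _ = 2 * (z : ℂ) / ((z : ℂ) + (c : ℂ)) * (1 / w) * Q := by ring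

/-- Main auxiliary lemma: the limits at a simple pole `c` with `c² = q₀²`. -/
lemma box_residue_aux (L q₀ h θ α : ℝ) (hq₀ : 0 < q₀) (hh : q₀ < h) (μ : ℝ → ℂ)
    (hμ : ∀ z : ℝ, z ≠ 0 → (μ z) ^ 2 = (kk q₀ z : ℂ) ^ 2 - (h : ℂ) ^ 2)
    (c : ℝ) (hc0 : c ≠ 0) (hc2 : c ^ 2 = q₀ ^ 2) :
    Tendsto (fun z : ℝ => ((z : ℂ) - (c : ℂ)) * aBox L q₀ h θ α μ z) (𝓝[≠] c)
      (𝓝 (Complex.I * Complex.exp (Complex.I * (θ : ℂ)) *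
        ((-(c * Real.sin θ) * Real.cosh (2 * L * mu0 q₀ h) +
          q₀ * (h * Real.cos α - q₀ * Real.cos θ) * Real.sinh (2 * L * mu0 q₀ h) / mu0 q₀ h
          : ℝ) : ℂ))) ∧
    Tendsto (fun z : ℝ => ((z : ℂ) - (c : ℂ)) * bBox L q₀ h θ α μ z) (𝓝[≠] c)
      (𝓝 (((-(q₀ * Real.sin θ) * Real.cosh (2 * L * mu0 q₀ h) +
          c * (h * Real.cos α - q₀ * Real.cos θ) * Real.sinh (2 * L * mu0 q₀ h) / mu0 q₀ h
          : ℝ) : ℂ))) := by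
  have hm2 : 0 < h ^ 2 - q₀ ^ 2 := by nlinarith
  have hmu0 : 0 < mu0 q₀ h := Real.sqrt_pos.mpr hm2
  have hkc : kk q₀ c = c := by rw [kk, ← hc2]; field_simp; ring
  have hlamc : lam q₀ c = 0 := by rw [lam, ← hc2]; field_simp; ring
  have hνc : nuC q₀ h c = Complex.I * ((mu0 q₀ h : ℝ) : ℂ) := by rw [nuC, hkc, hc2, mu0]
  have hμ0ne : ((mu0 q₀ h : ℝ) : ℂ) ≠ 0 := by exact_mod_cast hmu0.ne'
  have hcne : ((c : ℝ) : ℂ) ≠ 0 := by exact_mod_cast hc0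
  have hc2' : ((c : ℝ) : ℂ) ^ 2 = ((q₀ : ℝ) : ℂ) ^ 2 := by exact_mod_cast hc2
  have hνc0 : nuC q₀ h c ≠ 0 := by
    rw [hνc]; exact mul_ne_zero Complex.I_ne_zero hμ0ne
  -- continuity facts
  have hkC : ContinuousAt (fun z : ℝ => kk q₀ z) c := by
    have h1 : ContinuousAt (fun z : ℝ => (z + q₀ ^ 2 / z) / 2) c :=
      (continuousAt_id.add (continuousAt_const.div continuousAt_id hc0)).div_const 2
    simpa [kk] using h1
  have hlC : ContinuousAt (fun z : ℝ => lam q₀ z) c := by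
    have h1 : ContinuousAt (fun z : ℝ => (z - q₀ ^ 2 / z) / 2) c :=
      (continuousAt_id.sub (continuousAt_const.div continuousAt_id hc0)).div_const 2
    simpa [lam] using h1
  have hνC : ContinuousAt (fun z : ℝ => nuC q₀ h z) c := by
    have hs : ContinuousAt (fun z : ℝ => Real.sqrt (h ^ 2 - kk q₀ z ^ 2)) c :=
      Real.continuous_sqrt.continuousAt.comp (continuousAt_const.sub (hkC.pow 2))
    exact continuousAt_const.mul (Complex.continuous_ofReal.continuousAt.comp hs)
  have hkCC : ContinuousAt (fun z : ℝ => ((kk q₀ z : ℝ) : ℂ)) c :=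
    Complex.continuous_ofReal.continuousAt.comp hkC
  have hlCC : ContinuousAt (fun z : ℝ => ((lam q₀ z : ℝ) : ℂ)) c :=
    Complex.continuous_ofReal.continuousAt.comp hlC
  have hzc : ContinuousAt (fun z : ℝ => ((z : ℂ))) c := Complex.continuous_ofReal.continuousAt
  have h2z : ContinuousAt (fun z : ℝ => 2 * (z : ℂ) / ((z : ℂ) + (c : ℂ))) c := by
    apply ContinuousAt.div (continuousAt_const.mul hzc) (hzc.add continuousAt_const)
    intro h0
    have h0' : (c : ℂ) + (c : ℂ) = 0 := h0
    have h1 : c + c = 0 := by exact_mod_cast h0'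
    exact hc0 (by linarith)
  have hinv : ContinuousAt (fun z : ℝ => 1 / nuC q₀ h z) c :=
    ContinuousAt.div continuousAt_const hνC hνc0
  have hexpC : ContinuousAt
      (fun z : ℝ => Complex.exp (Complex.I * ((2 * L * lam q₀ z + θ : ℝ) : ℂ))) c := by
    apply Complex.continuous_exp.continuousAt.comp
    exact continuousAt_const.mul (Complex.continuous_ofReal.continuousAt.comp
      ((continuousAt_const.mul hlC).add continuousAt_const))
  have hcosC : ContinuousAt (fun z : ℝ => Complex.cos (2 * (L : ℂ) * nuC q₀ h z)) c :=
    Complex.continuous_cos.continuousAt.comp (continuousAt_const.mul hνC)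
  have hsinC : ContinuousAt (fun z : ℝ => Complex.sin (2 * (L : ℂ) * nuC q₀ h z)) c :=
    Complex.continuous_sin.continuousAt.comp (continuousAt_const.mul hνC)
  have hFaC : ContinuousAt (Fa L q₀ h θ α c) c := by
    unfold Fa
    exact ((h2z.mul hinv).mul hexpC).mul
      (((hνC.mul hcosC).mul ((hlCC.mul continuousAt_const).sub
          ((continuousAt_const.mul hkCC).mul continuousAt_const))).add
        ((continuousAt_const.mul hsinC).mul (continuousAt_const.sub
          (hkCC.mul ((hkCC.mul continuousAt_const).sub
            ((continuousAt_const.mul hlCC).mul continuousAt_const))))))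
  have hXC : ContinuousAt
      (fun z : ℝ => ((h * kk q₀ z * Real.cos α - kk q₀ z * q₀ * Real.cos θ : ℝ) : ℂ)) c :=
    Complex.continuous_ofReal.continuousAt.comp
      (((continuousAt_const.mul hkC).mul continuousAt_const).sub
        ((hkC.mul continuousAt_const).mul continuousAt_const))
  have hFbC : ContinuousAt (Fb L q₀ h θ α c) c := by
    unfold Fb
    exact (h2z.mul hinv).mul
      ((((continuousAt_const.mul hνC).mul continuousAt_const).mul hcosC).add
        ((hXC.sub ((continuousAt_const.mul hlCC).mul continuousAt_const)).mul
          hsinC))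
  -- eventual coincidence with Fa, Fb
  have hev : ∀ᶠ z in 𝓝[≠] c, z ≠ 0 ∧ kk q₀ z ^ 2 < h ^ 2 ∧ z ≠ c ∧ z ≠ -c := by
    have h1 : ∀ᶠ z in 𝓝 c, z ≠ 0 := eventually_ne_nhds hc0
    have h2 : ∀ᶠ z in 𝓝 c, kk q₀ z ^ 2 < h ^ 2 := by
      apply (hkC.pow 2).eventually_lt_const
      show kk q₀ c ^ 2 < h ^ 2
      rw [hkc]
      nlinarith
    have h3 : ∀ᶠ z in 𝓝 c, z ≠ -c := by
      apply eventually_ne_nhds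
      intro h0
      exact hc0 (by linarith)
    filter_upwards [nhdsWithin_le_nhds (h1.and (h2.and h3)), self_mem_nhdsWithin] with z hz hzc
    exact ⟨hz.1, hz.2.1, hzc, hz.2.2⟩
  have hswitch : ∀ z : ℝ, z ≠ 0 → kk q₀ z ^ 2 < h ^ 2 →
      aBox L q₀ h θ α μ z = aBox L q₀ h θ α (nuC q₀ h) z ∧
      bBox L q₀ h θ α μ z = bBox L q₀ h θ α (nuC q₀ h) z := by
    intro z hz0 hkh
    have hnn : (0 : ℝ) ≤ h ^ 2 - kk q₀ z ^ 2 := by linarith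
    have hν2 : nuC q₀ h z ^ 2 = (kk q₀ z : ℂ) ^ 2 - (h : ℂ) ^ 2 := by
      rw [nuC, mul_pow, Complex.I_sq]
      rw [show (((Real.sqrt (h ^ 2 - kk q₀ z ^ 2) : ℝ) : ℂ)) ^ 2
          = (((Real.sqrt (h ^ 2 - kk q₀ z ^ 2) ^ 2 : ℝ)) : ℂ) by push_cast; ring]
      rw [Real.sq_sqrt hnn]
      push_cast
      ring
    have hsq : μ z ^ 2 = nuC q₀ h z ^ 2 := by rw [hμ z hz0, hν2]
    have hfac : (μ z - nuC q₀ h z) * (μ z + nuC q₀ h z) = 0 := by linear_combination hsq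
    rcases mul_eq_zero.mp hfac with h1 | h1
    · have h2 : μ z = nuC q₀ h z := sub_eq_zero.mp h1
      constructor
      · rw [aBox, aBox, h2]
      · rw [bBox, bBox, h2]
    · have h2 : μ z = -nuC q₀ h z := eq_neg_of_add_eq_zero_left h1
      exact ⟨aBox_neg L q₀ h θ α μ (nuC q₀ h) z h2, bBox_neg L q₀ h θ α μ (nuC q₀ h) z h2⟩
  have hEqa : (fun z : ℝ => ((z : ℂ) - (c : ℂ)) * aBox L q₀ h θ α μ z)
      =ᶠ[𝓝[≠] c] Fa L q₀ h θ α c := by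
    filter_upwards [hev] with z hz
    obtain ⟨hz0, hkh, hzc, hzc'⟩ := hz
    rw [(hswitch z hz0 hkh).1]
    rw [aBox, Fa]
    exact pole_factor q₀ c z hc2 hz0 hzc hzc' (nuC q₀ h z) _ _
  have hEqb : (fun z : ℝ => ((z : ℂ) - (c : ℂ)) * bBox L q₀ h θ α μ z)
      =ᶠ[𝓝[≠] c] Fb L q₀ h θ α c := by
    filter_upwards [hev] with z hz
    obtain ⟨hz0, hkh, hzc, hzc'⟩ := hz
    rw [(hswitch z hz0 hkh).2]
    rw [bBox, Fb]
    exact pole_factor' q₀ c z hc2 hz0 hzc hzc' (nuC q₀ h z) _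
  -- values of Fa, Fb at c
  have harg : 2 * (L : ℂ) * (Complex.I * ((mu0 q₀ h : ℝ) : ℂ))
      = ((2 * L * mu0 q₀ h : ℝ) : ℂ) * Complex.I := by push_cast; ring
  have hFav : Fa L q₀ h θ α c c = Complex.I * Complex.exp (Complex.I * (θ : ℂ)) *
      ((-(c * Real.sin θ) * Real.cosh (2 * L * mu0 q₀ h) +
        q₀ * (h * Real.cos α - q₀ * Real.cos θ) * Real.sinh (2 * L * mu0 q₀ h) / mu0 q₀ h
        : ℝ) : ℂ) := by
    rw [Fa, hνc, hlamc, hkc, harg, Complex.cos_mul_I, Complex.sin_mul_I,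
      ← Complex.ofReal_cosh, ← Complex.ofReal_sinh]
    push_cast
    rw [show (2 : ℂ) * L * 0 + θ = θ by ring]
    field_simp
    ring_nf
    linear_combination (-2 * Complex.I * Complex.cos ((θ : ℝ) : ℂ) *
        Complex.sinh (((mu0 q₀ h : ℝ) : ℂ) * (L : ℂ) * 2)) * hc2'
  have hFbv : Fb L q₀ h θ α c c =
      ((-(q₀ * Real.sin θ) * Real.cosh (2 * L * mu0 q₀ h) +
        c * (h * Real.cos α - q₀ * Real.cos θ) * Real.sinh (2 * L * mu0 q₀ h) / mu0 q₀ h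
        : ℝ) : ℂ) := by
    rw [Fb, hνc, hlamc, hkc, harg, Complex.cos_mul_I, Complex.sin_mul_I,
      ← Complex.ofReal_cosh, ← Complex.ofReal_sinh]
    push_cast
    field_simp
    ring_nf
  constructor
  · exact Tendsto.congr' hEqa.symm
      (by rw [← hFav]; exact (hFaC.tendsto).mono_left nhdsWithin_le_nhds)
  · exact Tendsto.congr' hEqb.symm
      (by rw [← hFbv]; exact (hFbC.tendsto).mono_left nhdsWithin_le_nhds)

/-- the residues `α± = lim_{z→±q₀}(z ∓ q₀)a(z)` and
`β± = lim_{z→±q₀}(z ∓ q₀)b(z)` of the box scattering coefficients exist, with the stated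
explicit values; moreover `β± = ∓i e^{−iθ} α±` and `β±` are real. -/
theorem box_scattering_residues (L q₀ h θ α : ℝ) (hL : 0 ≤ L) (hq₀ : 0 < q₀)
    (hh : q₀ < h) (μ : ℝ → ℂ)
    (hμ : ∀ z : ℝ, z ≠ 0 → (μ z) ^ 2 = (kk q₀ z : ℂ) ^ 2 - (h : ℂ) ^ 2) :
    Tendsto (fun z : ℝ => ((z : ℂ) - (q₀ : ℂ)) * aBox L q₀ h θ α μ z)
      (𝓝[≠] q₀) (𝓝 (alphaPlus L q₀ h θ α)) ∧
    Tendsto (fun z : ℝ => ((z : ℂ) + (q₀ : ℂ)) * aBox L q₀ h θ α μ z)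
      (𝓝[≠] (-q₀)) (𝓝 (alphaMinus L q₀ h θ α)) ∧
    Tendsto (fun z : ℝ => ((z : ℂ) - (q₀ : ℂ)) * bBox L q₀ h θ α μ z)
      (𝓝[≠] q₀) (𝓝 (betaPlus L q₀ h θ α)) ∧
    Tendsto (fun z : ℝ => ((z : ℂ) + (q₀ : ℂ)) * bBox L q₀ h θ α μ z)
      (𝓝[≠] (-q₀)) (𝓝 (betaMinus L q₀ h θ α)) ∧
    betaPlus L q₀ h θ α =
      -Complex.I * Complex.exp (-(Complex.I * θ)) * alphaPlus L q₀ h θ α ∧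
    betaMinus L q₀ h θ α =
      Complex.I * Complex.exp (-(Complex.I * θ)) * alphaMinus L q₀ h θ α ∧
    (betaPlus L q₀ h θ α).im = 0 ∧ (betaMinus L q₀ h θ α).im = 0 := by
  obtain ⟨haP, hbP⟩ := box_residue_aux L q₀ h θ α hq₀ hh μ hμ q₀ hq₀.ne' rfl
  obtain ⟨haM, hbM⟩ := box_residue_aux L q₀ h θ α hq₀ hh μ hμ (-q₀)
    (neg_ne_zero.mpr hq₀.ne') (by ring)
  simp only [Complex.ofReal_neg, sub_neg_eq_add] at haM hbM
  have hvaP : alphaPlus L q₀ h θ α = Complex.I * Complex.exp (Complex.I * (θ : ℂ)) *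
      ((-(q₀ * Real.sin θ) * Real.cosh (2 * L * mu0 q₀ h) +
        q₀ * (h * Real.cos α - q₀ * Real.cos θ) * Real.sinh (2 * L * mu0 q₀ h) / mu0 q₀ h
        : ℝ) : ℂ) := by
    rw [alphaPlus]; push_cast; ring
  have hvaM : alphaMinus L q₀ h θ α = Complex.I * Complex.exp (Complex.I * (θ : ℂ)) *
      ((-(-q₀ * Real.sin θ) * Real.cosh (2 * L * mu0 q₀ h) +
        q₀ * (h * Real.cos α - q₀ * Real.cos θ) * Real.sinh (2 * L * mu0 q₀ h) / mu0 q₀ h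
        : ℝ) : ℂ) := by
    rw [alphaMinus]; push_cast; ring
  have hvbP : betaPlus L q₀ h θ α =
      ((-(q₀ * Real.sin θ) * Real.cosh (2 * L * mu0 q₀ h) +
        q₀ * (h * Real.cos α - q₀ * Real.cos θ) * Real.sinh (2 * L * mu0 q₀ h) / mu0 q₀ h
        : ℝ) : ℂ) := by
    rw [betaPlus]; push_cast; ring
  have hvbM : betaMinus L q₀ h θ α =
      ((-(q₀ * Real.sin θ) * Real.cosh (2 * L * mu0 q₀ h) +
        -q₀ * (h * Real.cos α - q₀ * Real.cos θ) * Real.sinh (2 * L * mu0 q₀ h) / mu0 q₀ h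
        : ℝ) : ℂ) := by
    rw [betaMinus]; push_cast; ring
  refine ⟨by rw [hvaP]; exact haP, by rw [hvaM]; exact haM,
    by rw [hvbP]; exact hbP, by rw [hvbM]; exact hbM, ?_, ?_, ?_, ?_⟩
  · rw [betaPlus, alphaPlus, Complex.exp_neg]
    push_cast
    field_simp
    ring_nf
    simp only [Complex.I_sq]
    ring
  · rw [betaMinus, alphaMinus, Complex.exp_neg]
    push_cast
    field_simp
    ring_nf
    simp only [Complex.I_sq]
    ring
  · rw [betaPlus]; exact Complex.ofReal_im _
  · rw [betaMinus]; exact Complex.ofReal_im _
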